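/- Witness lemma: Given the progress function obtained by functional choice on the proof-step relation over Π_φ, define witness(π) coinductively by witness(π) = e · witness(π') where (e, π') = progress(π). Then for π = (s1, s2, τ1) ∈ Π_φ, the sequence τ2 = witness(π) is a trace of s2 and for every i, (τ1[i], τ2[i]) ∈ φ. -/
import Mathlib


/-- A labeled transition system: states, optional-event-labeled steps, an initial state. -/
structure LTS (S E : Type*) where
  init : S
  step : S → Option E → S → Prop

namespace LTS

/-- Silent transition. -/
def Silent {S E : Type*} (T : LTS S E) (s s' : S) : Prop := T.step s none s'

/-- `Obs T s e s'`: finitely many silent steps followed by an `e`-labeled step. -/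
def Obs {S E : Type*} (T : LTS S E) (s : S) (e : E) (s' : S) : Prop :=
  ∃ s'', Relation.ReflTransGen T.Silent s s'' ∧ T.step s'' (some e) s'

/-- `τ` is an (infinite) trace originating from state `s`. -/
def IsTraceFrom {S E : Type*} (T : LTS S E) (s : S) (τ : ℕ → E) : Prop :=
  ∃ π : ℕ → S, π 0 = s ∧ ∀ i, T.Obs (π i) (τ i) (π (i + 1))

end LTS

/-- Greatest fixed point of an operator on subsets. -/
def nuSet {A : Type*} (F : Set A → Set A) : Set A := ⋃₀ {R | R ⊆ F R}

/-- The ∀∃-invariant functor. -/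
def feiF {S1 S2 E1 E2 : Type*} (T1 : LTS S1 E1) (T2 : LTS S2 E2) (φ : Set (E1 × E2))
    (R : Set (S1 × S2)) : Set (S1 × S2) :=
  {p | ∀ e1 s1', T1.Obs p.1 e1 s1' →
        ∃ e2 s2', T2.Obs p.2 e2 s2' ∧ (e1, e2) ∈ φ ∧ (s1', s2') ∈ R}

/-- Proof states: a state of each system together with a trace of the first state,
where the two states are related by `fei_φ`. -/
def PiSet {S1 S2 E1 E2 : Type*} (T1 : LTS S1 E1) (T2 : LTS S2 E2) (φ : Set (E1 × E2)) :
    Set (S1 × S2 × (ℕ → E1)) :=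
  {p | T1.IsTraceFrom p.1 p.2.2 ∧ (p.1, p.2.1) ∈ nuSet (feiF T1 T2 φ)}

/-- The labeled proof-step relation on proof states. -/
def ProofStep {S1 S2 E1 E2 : Type*} (T1 : LTS S1 E1) (T2 : LTS S2 E2) (φ : Set (E1 × E2))
    (p : S1 × S2 × (ℕ → E1)) (e2 : E2) (p' : S1 × S2 × (ℕ → E1)) : Prop :=
  T1.Obs p.1 (p.2.2 0) p'.1 ∧ T2.Obs p.2.1 e2 p'.2.1 ∧
    (p.2.2 0, e2) ∈ φ ∧ p'.2.2 = fun i => p.2.2 (i + 1)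

theorem witness {S1 S2 E1 E2 : Type*} (T1 : LTS S1 E1) (T2 : LTS S2 E2)
    (φ : Set (E1 × E2))
    (progress : (S1 × S2 × (ℕ → E1)) → E2 × (S1 × S2 × (ℕ → E1)))
    (hprog : ∀ p ∈ PiSet T1 T2 φ,
      ProofStep T1 T2 φ p (progress p).1 (progress p).2 ∧ (progress p).2 ∈ PiSet T1 T2 φ)
    (p : S1 × S2 × (ℕ → E1)) (hp : p ∈ PiSet T1 T2 φ)
    -- `πseq` iterates `progress` from `p`; `witness p` is the produced event sequence
    (πseq : ℕ → S1 × S2 × (ℕ → E1)) (h0 : πseq 0 = p)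
    (hsucc : ∀ n, πseq (n + 1) = (progress (πseq n)).2)
    (τ2 : ℕ → E2) (hτ2 : ∀ i, τ2 i = (progress (πseq i)).1) :
    T2.IsTraceFrom p.2.1 τ2 ∧ ∀ i, (p.2.2 i, τ2 i) ∈ φ := by
  have hmem : ∀ n, πseq n ∈ PiSet T1 T2 φ := by
    intro n
    induction n with
    | zero => rwa [h0]
    | succ n ih => rw [hsucc]; exact (hprog _ ih).2
  have hstep : ∀ n, ProofStep T1 T2 φ (πseq n) (τ2 n) (πseq (n + 1)) := by
    intro n
    rw [hτ2, hsucc]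
    exact (hprog _ (hmem n)).1
  have htr : ∀ n i, (πseq n).2.2 i = p.2.2 (i + n) := by
    intro n
    induction n with
    | zero => intro i; rw [h0]; simp
    | succ n ih =>
      intro i
      have h := (hstep n).2.2.2
      rw [hsucc] at h ⊢
      rw [h]
      simp only []
      rw [ih (i + 1)]
      ring_nf
  constructor
  · refine ⟨fun i => (πseq i).2.1, by simp [h0], fun i => ?_⟩
    exact (hstep i).2.1
  · intro i
    have h := (hstep i).2.2.1
    rw [htr i 0] at h; simpa using h
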